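/- arXiv:1703.06721 — 6 statements merged into one kernel-verified Lean document; each statement's English description precedes it below -/
import Mathlib

section
/- Let D > 0 and consider the characteristic equation λ - (A/τ_max)·∫₀^{τ_max} exp(-λτ) dτ = 0 with A = -D, arising from uniformly distributed delays on [0, τ_max]. Then λ = i·w₀ with w₀ = π/τ_cr is a root when τ_max = τ_cr = π²/(2D). -/
theorem uniform_imaginary_root (D : ℝ) (hD : 0 < D) (A : ℝ) (hA : A = -D)
    (τcr : ℝ) (hτ : τcr = Real.pi ^ 2 / (2 * D)) (w₀ : ℝ) (hw : w₀ = Real.pi / τcr) :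
    Complex.I * w₀ -
      ((A : ℂ) / τcr) * ∫ τ in (0:ℝ)..τcr, Complex.exp (-(Complex.I * w₀) * τ) = 0 := by
  have hπ := Real.pi_pos
  have hτpos : 0 < τcr := by
    rw [hτ]; positivity
  have hw₀pos : 0 < w₀ := by rw [hw]; positivity
  have hc : -(Complex.I * (w₀ : ℂ)) ≠ 0 := by
    simp [Complex.ext_iff, hw₀pos.ne']
  rw [integral_exp_mul_complex hc]
  have hwc : w₀ * τcr = Real.pi := by
    rw [hw]; field_simp
  have h1 : -(Complex.I * (w₀:ℂ)) * (τcr:ℂ) = -(Real.pi : ℂ) * Complex.I := by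
    push_cast [← hwc]; ring
  rw [h1]
  have h2 : Complex.exp (-(Real.pi:ℂ) * Complex.I) = -1 := by
    rw [show -(Real.pi:ℂ) * Complex.I = -(Real.pi * Complex.I) by ring,
      Complex.exp_neg, Complex.exp_pi_mul_I]
    norm_num
  rw [h2]
  have hkey : (w₀:ℂ)^2 * τcr = 2 * D := by
    have : w₀^2 * τcr = 2 * D := by
      rw [hw, hτ]; field_simp
    exact_mod_cast this
  have hI := Complex.I_sq
  have hτc : (τcr : ℂ) ≠ 0 := by exact_mod_cast hτpos.ne'
  have hwc0 : (w₀ : ℂ) ≠ 0 := by exact_mod_cast hw₀pos.ne'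
  rw [hA]; simp only [Complex.ofReal_zero, mul_zero, neg_zero, Complex.exp_zero, Complex.ofReal_neg]
  field_simp [hA, Complex.I_ne_zero]
  linear_combination (-1:ℂ)*hkey + ((↑w₀:ℂ)^2*↑τcr)*Complex.I_sq
end

section
/- Let D > 0 and k ≥ 2 an integer. Set β_c = D·cos^{k+1}(π/(2k))/sin(π/(2k)) and w₀ = D·cos^k(π/(2k)). Then λ = i·w₀ satisfies the characteristic equation i·w₀ + D·β_c^k/(β_c + i·w₀)^k = 0. -/
theorem gamma_critical_root (D : ℝ) (hD : 0 < D) (k : ℕ) (hk : 2 ≤ k)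
    (βc w₀ : ℝ)
    (hβc : βc = D * Real.cos (Real.pi / (2 * k)) ^ (k + 1) / Real.sin (Real.pi / (2 * k)))
    (hw : w₀ = D * Real.cos (Real.pi / (2 * k)) ^ k) :
    Complex.I * w₀ + (D : ℂ) * (βc : ℂ) ^ k / ((βc : ℂ) + Complex.I * w₀) ^ k = 0 := by
  have hkpos : (0:ℝ) < k := by positivity
  have hπ := Real.pi_pos
  set θ := Real.pi / (2 * k) with hθdef
  have hθpos : 0 < θ := by positivity
  have hθlt : θ < Real.pi / 2 := by
    rw [hθdef]
    rw [div_lt_div_iff₀ (by positivity) (by norm_num)]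
    have : (2:ℝ) ≤ k := by exact_mod_cast hk
    nlinarith
  have hcos : 0 < Real.cos θ := Real.cos_pos_of_mem_Ioo ⟨by linarith, hθlt⟩
  have hsin : 0 < Real.sin θ := Real.sin_pos_of_pos_of_lt_pi hθpos (by linarith)
  set r : ℝ := D * Real.cos θ ^ k / Real.sin θ with hrdef
  have hr : 0 < r := by positivity
  have hβr : βc = r * Real.cos θ := by
    rw [hβc, hrdef, pow_succ]; field_simp
  have hkθ : (k : ℝ) * θ = Real.pi / 2 := by
    rw [hθdef]; field_simp
  have hsum : (βc:ℂ) + Complex.I * w₀ = (r:ℂ) * Complex.exp (θ * Complex.I) := by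
    rw [Complex.exp_mul_I, hβr, hw]
    push_cast
    rw [← Complex.ofReal_cos, ← Complex.ofReal_sin]
    have : (D:ℂ) * (Real.cos θ:ℂ) ^ k = (r:ℂ) * (Real.sin θ:ℂ) := by
      have hsne : Complex.sin (θ:ℂ) ≠ 0 := by
        rw [← Complex.ofReal_sin]; exact_mod_cast hsin.ne'
      rw [hrdef]; push_cast; field_simp [hsne]
    rw [this]; ring
  have hpow : ((βc:ℂ) + Complex.I * w₀) ^ k = (r:ℂ) ^ k * Complex.I := by
    rw [hsum, mul_pow, ← Complex.exp_nat_mul]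
    have h1 : (k:ℂ) * ((θ:ℂ) * Complex.I) = ((Real.pi/2 : ℝ):ℂ) * Complex.I := by
      rw [← mul_assoc]
      congr 1
      push_cast [← hkθ]
      ring
    rw [h1, Complex.exp_mul_I, ← Complex.ofReal_cos, ← Complex.ofReal_sin,
      Real.cos_pi_div_two, Real.sin_pi_div_two]
    push_cast; ring
  rw [hpow, hβr, hw]
  have hrne : (r:ℂ) ≠ 0 := by exact_mod_cast hr.ne'
  push_cast
  field_simp
  ring_nf
  rw [Complex.I_sq]
  ring
end

section
/- Let δ > 0, γ > 0, and 0 < p ≤ 1/2. Then every root λ of the characteristic equation λ + pδγ·exp(-λτ) + (1-p)δγ = 0 has Re(λ) < 0, for every τ ≥ 0. -/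
theorem discrete_delay_stable (δ γ p τ : ℝ) (hδ : 0 < δ) (hγ : 0 < γ)
    (hp0 : 0 < p) (hp : p ≤ 1 / 2) (hτ : 0 ≤ τ) (lam : ℂ)
    (h : lam + (p * δ * γ : ℝ) * Complex.exp (-lam * τ) + ((1 - p) * δ * γ : ℝ) = 0) :
    lam.re < 0 := by
  by_contra hr
  push_neg at hr
  set b : ℝ := p * δ * γ with hbdef
  set a : ℝ := (1 - p) * δ * γ with hadef
  set E : ℂ := Complex.exp (-lam * τ) with hE
  have hb : 0 < b := by positivity
  have ha : 0 < a := by nlinarith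
  have hba : b ≤ a := by nlinarith
  have habs : ‖E‖ = Real.exp (-(lam.re * τ)) := by
    rw [hE, Complex.norm_exp]
    congr 1
    simp [Complex.mul_re]
  have habs1 : ‖E‖ ≤ 1 := by
    rw [habs]
    exact Real.exp_le_one_iff.mpr (by nlinarith)
  have hEre : -1 ≤ E.re := by
    have h1 := Complex.abs_re_le_norm E
    have h2 := abs_le.mp (le_trans h1 habs1)
    linarith [h2.1]
  have hre : lam.re + b * E.re + a = 0 := by
    have := congrArg Complex.re h
    simpa [Complex.add_re, Complex.mul_re] using this
  have him : lam.im + b * E.im = 0 := by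
    have := congrArg Complex.im h
    simpa [Complex.add_im, Complex.mul_im] using this
  have hre0 : lam.re = 0 := by nlinarith
  have hab : a = b := by nlinarith
  have hEre1 : E.re = -1 := by nlinarith
  have habs1' : ‖E‖ = 1 := by rw [habs, hre0]; simp
  have hEim : E.im = 0 := by
    have h2 : E.re ^ 2 + E.im ^ 2 = 1 := by
      have h3 := Complex.sq_norm E
      rw [habs1'] at h3
      simpa [Complex.normSq_apply, sq] using h3.symm
    nlinarith
  have him0 : lam.im = 0 := by nlinarith
  have hlam0 : lam = 0 := Complex.ext hre0 him0
  have hEval : E = 1 := by rw [hE, hlam0]; simp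
  rw [hEval] at hEre1
  norm_num at hEre1
end

section
/- Let δ > 0, γ > 0, τ > 0, and p ∈ (0,1]. If λ = u + i·v with u > 0 and v > 0 is a root of λ + pδγ·e^{-λτ} + (1-p)δγ = 0, then p > 1/2. -/
theorem unstable_root_forces_p_large (δ γ τ p u v : ℝ) (hδ : 0 < δ) (hγ : 0 < γ)
    (hτ : 0 < τ) (hp0 : 0 < p) (hp1 : p ≤ 1) (hu : 0 < u) (hv : 0 < v)
    (h : ((u : ℂ) + v * Complex.I) +
        (p * δ * γ : ℝ) * Complex.exp (-((u : ℂ) + v * Complex.I) * τ) +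
        ((1 - p) * δ * γ : ℝ) = 0) :
    1 / 2 < p := by
  set D := δ * γ with hD
  have hDpos : 0 < D := mul_pos hδ hγ
  have heq : ((p * δ * γ : ℝ) : ℂ) * Complex.exp (-((u : ℂ) + v * Complex.I) * τ)
      = -(((u : ℂ) + v * Complex.I) + ((1 - p) * δ * γ : ℝ)) := by
    linear_combination h
  have habs := congrArg (‖·‖) heq
  have hre : (-((u : ℂ) + v * Complex.I) * τ).re = -u * τ := by
    simp [Complex.add_re, Complex.mul_re]
  rw [norm_mul, Complex.norm_exp, hre, norm_neg, Complex.norm_real, Real.norm_eq_abs] at habs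
  have hlb : u + (1 - p) * δ * γ ≤ ‖((u : ℂ) + v * Complex.I) + ((1 - p) * δ * γ : ℝ)‖ := by
    have := Complex.re_le_norm (((u : ℂ) + v * Complex.I) + ((1 - p) * δ * γ : ℝ))
    simpa [Complex.add_re, Complex.mul_re] using this
  have hexp : Real.exp (-u * τ) < 1 := by
    rw [Real.exp_lt_one_iff]
    nlinarith
  have hpabs : |p * δ * γ| = p * δ * γ := abs_of_pos (by positivity)
  rw [hpabs] at habs
  have h1 : u + (1 - p) * δ * γ ≤ p * δ * γ * Real.exp (-u * τ) := habs ▸ hlb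
  have h2 : p * δ * γ * Real.exp (-u * τ) < p * δ * γ := by
    nlinarith [Real.exp_pos (-u * τ)]
  nlinarith
end

section
/- Let D > 0 and p ∈ (1/2, 1]. Set w₀ = D·√(2p-1) and τ_cr = arccos(-(1-p)/p)/(D·√(2p-1)). Then λ = i·w₀ is a root of the characteristic equation λ + pD·e^{-λτ_cr} + (1-p)D = 0. -/
theorem discrete_delay_critical_root (D p : ℝ) (hD : 0 < D) (hp : 1 / 2 < p) (hp1 : p ≤ 1)
    (w₀ τcr : ℝ) (hw : w₀ = D * Real.sqrt (2 * p - 1))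
    (hτ : τcr = Real.arccos (-(1 - p) / p) / (D * Real.sqrt (2 * p - 1))) :
    Complex.I * w₀ + (p * D : ℝ) * Complex.exp (-(Complex.I * w₀) * τcr) +
      ((1 - p) * D : ℝ) = 0 := by
  have hp0 : (0:ℝ) < p := by linarith
  have h2p : (0:ℝ) < 2 * p - 1 := by linarith
  have hs : (0:ℝ) < Real.sqrt (2 * p - 1) := Real.sqrt_pos.mpr h2p
  have hne : D * Real.sqrt (2 * p - 1) ≠ 0 := by positivity
  have hwt : w₀ * τcr = Real.arccos (-(1 - p) / p) := by
    rw [hw, hτ]; field_simp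
  have hcos : Real.cos (w₀ * τcr) = -(1 - p) / p := by
    rw [hwt]; apply Real.cos_arccos
    · rw [le_div_iff₀ hp0]; linarith
    · rw [div_le_one hp0]; linarith
  have hsin : Real.sin (w₀ * τcr) = Real.sqrt (2 * p - 1) / p := by
    rw [hwt, Real.sin_arccos]
    have h1 : 1 - (-(1 - p) / p) ^ 2 = (2 * p - 1) / p ^ 2 := by
      field_simp; ring
    rw [h1, Real.sqrt_div h2p.le, Real.sqrt_sq hp0.le]
  have harg : -(Complex.I * (w₀:ℂ)) * (τcr:ℂ) = ((-(w₀ * τcr) : ℝ) : ℂ) * Complex.I := by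
    push_cast; ring
  rw [harg, Complex.exp_mul_I, ← Complex.ofReal_cos, ← Complex.ofReal_sin,
    Real.cos_neg, Real.sin_neg, hcos, hsin, hw]
  have hsq : Real.sqrt (2 * p - 1) * Real.sqrt (2 * p - 1) = 2 * p - 1 :=
    Real.mul_self_sqrt h2p.le
  apply Complex.ext <;> simp [Complex.add_re, Complex.add_im, Complex.mul_re, Complex.mul_im] <;>
    field_simp <;> ring
end

section
/- For D > 0 and p ∈ (1/2, 1], the critical delay τ_cr(p) = arccos(-(1-p)/p)/(D√(2p-1)) satisfies τ_cr(p) ≥ π/(2D), with equality if and only if p = 1. -/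
theorem discrete_delay_critical_delay_ge (D p : ℝ) (hD : 0 < D)
    (hp : 1 / 2 < p) (hp1 : p ≤ 1) :
    Real.pi / (2 * D) ≤ Real.arccos (-(1 - p) / p) / (D * Real.sqrt (2 * p - 1)) ∧
      (Real.arccos (-(1 - p) / p) / (D * Real.sqrt (2 * p - 1)) = Real.pi / (2 * D) ↔
        p = 1) := by
  have hp0 : 0 < p := by linarith
  set x : ℝ := -(1 - p) / p with hx
  have hx0 : x ≤ 0 := by
    apply div_nonpos_of_nonpos_of_nonneg <;> nlinarith
  set s : ℝ := Real.sqrt (2 * p - 1) with hs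
  have hs0 : 0 < s := Real.sqrt_pos.mpr (by linarith)
  have hs1 : s ≤ 1 := by
    have h := Real.sqrt_le_sqrt (show 2 * p - 1 ≤ 1 by linarith)
    simpa [hs] using h
  have ha : Real.pi / 2 ≤ Real.arccos x := by
    rw [Real.arccos]
    have := Real.arcsin_nonpos.mpr hx0
    linarith
  have hDs : 0 < D * s := mul_pos hD hs0
  have hip : 0 < Real.pi := Real.pi_pos
  have hb : Real.pi * D ≤ Real.arccos x * (2 * D) := by
    have := mul_le_mul_of_nonneg_right ha (by linarith : (0:ℝ) ≤ 2 * D)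
    nlinarith
  have h1 : Real.pi * (D * s) ≤ Real.pi * D := by
    nlinarith [mul_nonneg (mul_pos hip hD).le (sub_nonneg.mpr hs1)]
  have hmain : Real.pi / (2 * D) ≤ Real.arccos x / (D * s) := by
    rw [div_le_div_iff₀ (by linarith) hDs]
    linarith
  refine ⟨hmain, ?_, ?_⟩
  · intro heq
    have h2 : Real.arccos x * (2 * D) = Real.pi * (D * s) := by
      rw [div_eq_div_iff hDs.ne' (by positivity : (2 * D) ≠ 0)] at heq
      linarith
    have hs1' : s = 1 := by
      have hpd : 0 < Real.pi * D := mul_pos hip hD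
      nlinarith
    have : (2 : ℝ) * p - 1 = 1 := by
      have := Real.sqrt_eq_one.mp hs1'
      linarith [this]
    linarith
  · intro h
    subst h
    have hx1 : x = 0 := by norm_num [hx]
    rw [hx1, Real.arccos_zero]
    have hs2 : s = 1 := by norm_num [hs]
    rw [hs2]
    ring
end
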